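/- Groups H₁ and H₂ are geometrically equivalent if and only if LSC(H₁) = LSC(H₂), i.e., if and only if for every group G the following two conditions on G are equivalent: (a) for every finitely generated subgroup K of G, homomorphisms into H₁ separate the points of K; (b) for every finitely generated subgroup K of G, homomorphisms into H₂ separate the points of K. -/

import Mathlib

/-- The `H`-closure of a set `S` of elements of the free group on `n` generators. -/
def GClosure (H : Type*) [Group H] {n : ℕ} (S : Set (FreeGroup (Fin n))) :
    Set (FreeGroup (Fin n)) :=
  {w | ∀ φ : FreeGroup (Fin n) →* H, (∀ s ∈ S, φ s = 1) → φ w = 1}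

/-- Groups `H₁` and `H₂` are geometrically equivalent. -/
def GeomEquivalent (H₁ H₂ : Type*) [Group H₁] [Group H₂] : Prop :=
  ∀ (n : ℕ) (S : Set (FreeGroup (Fin n))), GClosure H₁ S = GClosure H₂ S

/-- Homomorphisms into `H` separate the points of `K`. -/
def SeparatesPoints (H K : Type*) [Group H] [Group K] : Prop :=
  ∀ a b : K, a ≠ b → ∃ φ : K →* H, φ a ≠ φ b

lemma sep_iff_triv (H K : Type*) [Group H] [Group K] :
    SeparatesPoints H K ↔ ∀ a : K, a ≠ 1 → ∃ φ : K →* H, φ a ≠ 1 := by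
  constructor
  · intro h a ha
    obtain ⟨φ, hφ⟩ := h a 1 ha
    exact ⟨φ, by simpa using hφ⟩
  · intro h a b hab
    obtain ⟨φ, hφ⟩ := h (a * b⁻¹) (by simpa [mul_inv_eq_one] using hab)
    exact ⟨φ, fun he => hφ (by simp [he])⟩

lemma sep_of_geomEquiv (H₁ H₂ : Type) [Group H₁] [Group H₂]
    (h : GeomEquivalent H₁ H₂) (G : Type) [Group G] (K : Subgroup G) (hK : K.FG)
    (h1 : SeparatesPoints H₁ K) : SeparatesPoints H₂ K := by
  have hfg : Group.FG K := (Group.fg_iff_subgroup_fg K).mpr hK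
  obtain ⟨n, T, hTcard, hTtop⟩ := Group.fg_iff'.mp hfg
  let f : Fin T.card → K := fun i => (T.equivFin.symm i : K)
  have hrange : Set.range f = (T : Set K) := by
    ext x
    constructor
    · rintro ⟨i, rfl⟩; exact (T.equivFin.symm i).2
    · intro hx; exact ⟨T.equivFin ⟨x, hx⟩, by simp [f]⟩
  let π : FreeGroup (Fin T.card) →* K := FreeGroup.lift f
  have hπ : Function.Surjective π := by
    rw [← MonoidHom.range_eq_top, FreeGroup.range_lift_eq_closure, hrange, hTtop]
  rw [sep_iff_triv] at h1 ⊢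
  intro a ha
  obtain ⟨w, hw⟩ := hπ a
  set S : Set (FreeGroup (Fin T.card)) := {x | π x = 1} with hS
  have hwnot : w ∉ GClosure H₁ S := by
    intro hmem
    obtain ⟨ψ, hψ⟩ := h1 a ha
    have : (ψ.comp π) w = 1 := by
      apply hmem
      intro s hs
      simp only [MonoidHom.comp_apply]
      rw [show π s = 1 from hs]
      simp
    rw [MonoidHom.comp_apply, hw] at this
    exact hψ this
  rw [h _ S] at hwnot
  simp only [GClosure, Set.mem_setOf_eq, not_forall] at hwnot
  obtain ⟨φ, hφS, hφw⟩ := hwnot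
  have hker : π.ker ≤ φ.ker := fun x hx => hφS x hx
  refine ⟨π.liftOfSurjective hπ ⟨φ, hker⟩, ?_⟩
  rw [← hw]
  simpa using hφw

/-- The `H₂`-closure of `S` as a subgroup. -/
def clSubgroup (H : Type) [Group H] {n : ℕ} (S : Set (FreeGroup (Fin n))) :
    Subgroup (FreeGroup (Fin n)) where
  carrier := GClosure H S
  one_mem' := fun φ _ => map_one φ
  mul_mem' := fun {a b} ha hb φ hφ => by
    rw [map_mul, ha φ hφ, hb φ hφ, one_mul]
  inv_mem' := fun {a} ha φ hφ => by rw [map_inv, ha φ hφ, inv_one]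

instance clSubgroup_normal (H : Type) [Group H] {n : ℕ} (S : Set (FreeGroup (Fin n))) :
    (clSubgroup H S).Normal := by
  constructor
  intro a ha g φ hφ
  have := ha φ hφ
  simp [this]

lemma gclosure_subset (H₁ H₂ : Type) [Group H₁] [Group H₂]
    (h : ∀ (G : Type) [Group G],
      (∀ K : Subgroup G, K.FG → SeparatesPoints H₂ K) →
        (∀ K : Subgroup G, K.FG → SeparatesPoints H₁ K))
    (n : ℕ) (S : Set (FreeGroup (Fin n))) : GClosure H₁ S ⊆ GClosure H₂ S := by
  set N := clSubgroup H₂ S with hN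
  set G := FreeGroup (Fin n) ⧸ N with hG
  set π : FreeGroup (Fin n) →* G := QuotientGroup.mk' N with hπdef
  have hπ : Function.Surjective π := QuotientGroup.mk'_surjective N
  have hSker : ∀ s ∈ S, π s = 1 := by
    intro s hs
    rw [hπdef]
    rw [QuotientGroup.mk'_apply, QuotientGroup.eq_one_iff]
    exact fun φ hφ => hφ s hs
  -- H₂ separates points of G
  have hsepG2 : SeparatesPoints H₂ G := by
    rw [sep_iff_triv]
    intro a ha
    obtain ⟨w, hw⟩ := hπ a
    have hwN : w ∉ N := by
      intro hwN
      apply ha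
      rw [← hw, hπdef, QuotientGroup.mk'_apply, QuotientGroup.eq_one_iff]
      exact hwN
    simp only [hN, clSubgroup, Subgroup.mem_mk, Submonoid.mem_mk, Subsemigroup.mem_mk, GClosure, Set.mem_setOf_eq, not_forall] at hwN
    obtain ⟨φ, hφS, hφw⟩ := hwN
    have hφN : ∀ x ∈ N, φ x = 1 := fun x hx => hx φ hφS
    refine ⟨QuotientGroup.lift N φ hφN, ?_⟩
    rw [← hw]
    exact hφw
  -- hence all fg subgroups of G are H₂-separated
  have hsub2 : ∀ K : Subgroup G, K.FG → SeparatesPoints H₂ K := by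
    intro K _ a b hab
    obtain ⟨φ, hφ⟩ := hsepG2 (a : G) (b : G) (fun he => hab (Subtype.ext he))
    exact ⟨φ.comp K.subtype, hφ⟩
  have hsub1 := h G hsub2
  -- G is fg
  have hGfg : Group.FG G := by
    have : Group.FG (FreeGroup (Fin n)) := by
      rw [Group.fg_iff]
      exact ⟨Set.range FreeGroup.of, FreeGroup.closure_range_of _, Set.finite_range _⟩
    exact Group.fg_of_surjective hπ
  have hsepG1 : SeparatesPoints H₁ G := by
    have htop := hsub1 ⊤ (Group.fg_def.mp hGfg)
    intro a b hab
    obtain ⟨φ, hφ⟩ := htop ⟨a, trivial⟩ ⟨b, trivial⟩ (fun he => hab (congrArg Subtype.val he))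
    exact ⟨φ.comp (Subgroup.topEquiv (G := G)).symm.toMonoidHom, hφ⟩
  -- conclude
  intro w hw
  intro φ hφ
  -- show w ∈ N, then φ w = 1 follows
  have hwN : w ∈ N := by
    by_contra hwN
    have hπw : π w ≠ 1 := by
      rw [hπdef, QuotientGroup.mk'_apply, Ne, QuotientGroup.eq_one_iff]
      exact hwN
    rw [sep_iff_triv] at hsepG1
    obtain ⟨ψ, hψ⟩ := hsepG1 (π w) hπw
    apply hψ
    have : (ψ.comp π) w = 1 := hw (ψ.comp π) (by
      intro s hs
      simp only [MonoidHom.comp_apply, hSker s hs, map_one])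
    simpa using this
  exact hwN φ hφ

/-- `H₁` and `H₂` are geometrically equivalent iff `LSC(H₁) = LSC(H₂)`: for every group `G`,
all finitely generated subgroups of `G` have their points separated by homomorphisms into
`H₁` iff the same holds with `H₂`. -/
theorem geomEquivalent_iff_lsc_eq (H₁ H₂ : Type) [Group H₁] [Group H₂] :
    GeomEquivalent H₁ H₂ ↔
      ∀ (G : Type) [Group G],
        ((∀ K : Subgroup G, K.FG → SeparatesPoints H₁ K) ↔
          (∀ K : Subgroup G, K.FG → SeparatesPoints H₂ K)) := by
  constructor
  · intro h G _
    have h' : GeomEquivalent H₂ H₁ := fun n S => (h n S).symm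
    constructor
    · intro h1 K hK; exact sep_of_geomEquiv H₁ H₂ h G K hK (h1 K hK)
    · intro h2 K hK; exact sep_of_geomEquiv H₂ H₁ h' G K hK (h2 K hK)
  · intro h n S
    apply Set.Subset.antisymm
    · exact gclosure_subset H₁ H₂ (fun G _ => (h G).mpr) n S
    · exact gclosure_subset H₂ H₁ (fun G _ => (h G).mp) n S
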